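/- Let d ≥ 2, let 2 ≤ μ₁ < μ₂ < ⋯ < μ_{d+1} be squarefree integers with μ_n ≤ λn for all n (where λ ≥ 2 is real), and let 1 ≤ ν ≤ d+1. If x, y ∈ ℤ satisfy x² < μ₁y², then |∏_{1≤n≤d+1, n≠ν}(x² − μ_n y²)| ≥ ((d−1)!/λ^{d−1})·x^{2d−2}. -/

import Mathlib

open Finset

lemma mu_lb {d : ℕ} (μ : Fin (d + 1) → ℤ) (h : StrictMono μ) :
    ∀ m : Fin (d + 1), (m.val : ℤ) + μ 0 ≤ μ m := by
  intro m
  induction m using Fin.induction with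
  | zero => simp
  | succ i ih =>
      have h1 : μ i.castSucc < μ i.succ := h (Fin.castSucc_lt_succ (i := i))
      have h2 : (i.castSucc.val : ℤ) + μ 0 ≤ μ i.castSucc := ih
      have h3 : i.succ.val = i.castSucc.val + 1 := by simp
      rw [h3]
      push_cast
      omega

/-- For d ≥ 2, squarefree integers 2 ≤ μ₁ < ⋯ < μ_{d+1} with μ_n ≤ λ·n
(λ ≥ 2 real), and x, y ∈ ℤ with x² < μ₁y²:
|∏_{n≠ν}(x² − μ_n y²)| ≥ ((d−1)!/λ^{d−1})·x^{2d−2}. -/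
theorem stmt_12 (d : ℕ) (hd : 2 ≤ d) (lam : ℝ) (hlam : 2 ≤ lam)
    (μ : Fin (d + 1) → ℤ) (hμ1 : 2 ≤ μ 0) (hμsf : ∀ n, Squarefree (μ n))
    (hμmono : StrictMono μ) (hμlam : ∀ n : Fin (d + 1), (μ n : ℝ) ≤ lam * ((n : ℕ) + 1))
    (ν : Fin (d + 1)) (x y : ℤ) (hxy : (x : ℝ) ^ 2 < (μ 0 : ℝ) * (y : ℝ) ^ 2) :
    ((d - 1).factorial : ℝ) / lam ^ (d - 1) * (x : ℝ) ^ (2 * d - 2) ≤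
      ((|∏ n ∈ Finset.univ.erase ν, (x ^ 2 - μ n * y ^ 2)| : ℤ) : ℝ) := by
  have hlam0 : (0 : ℝ) < lam := by linarith
  have hμ0lam : (μ 0 : ℝ) ≤ lam := by simpa using hμlam 0
  have hy2 : (0 : ℝ) ≤ (y : ℝ) ^ 2 := sq_nonneg _
  have hylam : (x : ℝ) ^ 2 / lam ≤ (y : ℝ) ^ 2 := by
    rw [div_le_iff₀ hlam0]
    nlinarith
  have hxyZ : x ^ 2 < μ 0 * y ^ 2 := by exact_mod_cast hxy
  set F : Fin (d + 1) → ℤ := fun n => μ n * y ^ 2 - x ^ 2 with hFdef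
  have hF1 : ∀ n : Fin (d + 1), 1 ≤ F n := by
    intro n
    have h0 : μ 0 ≤ μ n := hμmono.monotone (Fin.zero_le n)
    have h1 : 0 ≤ (μ n - μ 0) * y ^ 2 :=
      mul_nonneg (by omega) (sq_nonneg y)
    simp only [hFdef]
    nlinarith
  have habs : |∏ n ∈ Finset.univ.erase ν, (x ^ 2 - μ n * y ^ 2)|
      = ∏ n ∈ Finset.univ.erase ν, F n := by
    rw [Finset.abs_prod]
    refine Finset.prod_congr rfl fun n _ => ?_
    rw [abs_sub_comm]
    exact abs_of_pos (by have := hF1 n; simp only [hFdef] at this; omega)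
  -- index choice function
  set τ : ℕ → Fin (d + 1) := fun i =>
    ⟨(if i + 1 < (ν : ℕ) then i + 1 else i + 2) % (d + 1),
      Nat.mod_lt _ (Nat.succ_pos d)⟩ with hτdef
  have hτval : ∀ i < d - 1, (τ i).val = if i + 1 < (ν : ℕ) then i + 1 else i + 2 := by
    intro i hi
    have hb : (if i + 1 < (ν : ℕ) then i + 1 else i + 2) < d + 1 := by
      split <;> omega
    simp [hτdef, Nat.mod_eq_of_lt hb]
  have hτne : ∀ i < d - 1, τ i ≠ ν := by
    intro i hi h
    have := congrArg Fin.val h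
    rw [hτval i hi] at this
    split_ifs at this <;> omega
  have hτlb : ∀ i < d - 1, i + 1 ≤ (τ i).val := by
    intro i hi
    rw [hτval i hi]
    split <;> omega
  have hinj : Set.InjOn τ (Finset.range (d - 1)) := by
    intro i hi j hj h
    simp only [coe_range, Set.mem_Iio] at hi hj
    have := congrArg Fin.val h
    rw [hτval i hi, hτval j hj] at this
    split_ifs at this <;> omega
  have hsub : (Finset.range (d - 1)).image τ ⊆ Finset.univ.erase ν := by
    intro a ha
    rw [Finset.mem_image] at ha
    obtain ⟨i, hi, rfl⟩ := ha
    rw [Finset.mem_range] at hi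
    exact Finset.mem_erase.mpr ⟨hτne i hi, Finset.mem_univ _⟩
  have hone : ∀ s : Finset (Fin (d + 1)), 1 ≤ ∏ n ∈ s, F n := by
    intro s
    calc (1 : ℤ) = ∏ _n ∈ s, 1 := Finset.prod_const_one.symm
      _ ≤ ∏ n ∈ s, F n :=
        Finset.prod_le_prod (fun i _ => zero_le_one) (fun i _ => hF1 i)
  have hstep1 : ∏ n ∈ (Finset.range (d - 1)).image τ, F n
      ≤ ∏ n ∈ Finset.univ.erase ν, F n := by
    rw [← Finset.prod_sdiff hsub]
    exact le_mul_of_one_le_left (le_trans zero_le_one (hone _)) (hone _)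
  have hstep2 : ∏ n ∈ (Finset.range (d - 1)).image τ, F n
      = ∏ i ∈ Finset.range (d - 1), F (τ i) := Finset.prod_image hinj
  have hZ : ∏ i ∈ Finset.range (d - 1), F (τ i) ≤ ∏ n ∈ Finset.univ.erase ν, F n := by
    rw [← hstep2]; exact hstep1
  have hkey : ∀ i ∈ Finset.range (d - 1),
      ((i : ℝ) + 1) * ((x : ℝ) ^ 2 / lam) ≤ ((F (τ i) : ℤ) : ℝ) := by
    intro i hi
    rw [Finset.mem_range] at hi
    have h1 : (i : ℤ) + 1 ≤ ((τ i).val : ℤ) := by exact_mod_cast hτlb i hi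
    have h2 : ((τ i).val : ℤ) + μ 0 ≤ μ (τ i) := mu_lb μ hμmono (τ i)
    have h3 : ((i : ℝ) + 1) ≤ (μ (τ i) : ℝ) - (μ 0 : ℝ) := by
      have : (i : ℤ) + 1 ≤ μ (τ i) - μ 0 := by omega
      exact_mod_cast this
    have hcast : ((F (τ i) : ℤ) : ℝ) = (μ (τ i) : ℝ) * (y : ℝ) ^ 2 - (x : ℝ) ^ 2 := by
      simp only [hFdef]; push_cast; ring
    rw [hcast]
    have h4 : (0 : ℝ) ≤ ((i : ℝ) + 1) * ((y : ℝ) ^ 2 - (x : ℝ) ^ 2 / lam) :=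
      mul_nonneg (by positivity) (by linarith)
    have h5 : (0 : ℝ) ≤ ((μ (τ i) : ℝ) - (μ 0 : ℝ) - ((i : ℝ) + 1)) * (y : ℝ) ^ 2 :=
      mul_nonneg (by linarith) hy2
    nlinarith [hxy.le]
  have hstep3 : ∏ i ∈ Finset.range (d - 1), (((i : ℝ) + 1) * ((x : ℝ) ^ 2 / lam))
      ≤ ∏ i ∈ Finset.range (d - 1), ((F (τ i) : ℤ) : ℝ) := by
    refine Finset.prod_le_prod (fun i _ => ?_) hkey
    exact mul_nonneg (by positivity) (div_nonneg (sq_nonneg _) hlam0.le)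
  have hprodeq : ∏ i ∈ Finset.range (d - 1), (((i : ℝ) + 1) * ((x : ℝ) ^ 2 / lam))
      = ((d - 1).factorial : ℝ) / lam ^ (d - 1) * (x : ℝ) ^ (2 * d - 2) := by
    rw [Finset.prod_mul_distrib, Finset.prod_const]
    have h1 : ∏ i ∈ Finset.range (d - 1), ((i : ℝ) + 1) = ((d - 1).factorial : ℝ) := by
      rw_mod_cast [Finset.prod_range_add_one_eq_factorial]
    have h2 : 2 * d - 2 = 2 * (d - 1) := by omega
    rw [h1, Finset.card_range, div_pow, h2, pow_mul]
    ring
  have hcastZ : ∏ i ∈ Finset.range (d - 1), ((F (τ i) : ℤ) : ℝ)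
      ≤ ((∏ n ∈ Finset.univ.erase ν, F n : ℤ) : ℝ) := by exact_mod_cast hZ
  rw [habs]
  calc ((d - 1).factorial : ℝ) / lam ^ (d - 1) * (x : ℝ) ^ (2 * d - 2)
      = ∏ i ∈ Finset.range (d - 1), (((i : ℝ) + 1) * ((x : ℝ) ^ 2 / lam)) := hprodeq.symm
    _ ≤ ∏ i ∈ Finset.range (d - 1), ((F (τ i) : ℤ) : ℝ) := hstep3
    _ ≤ ((∏ n ∈ Finset.univ.erase ν, F n : ℤ) : ℝ) := hcastZ
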